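/- Let A be an admissible pseudo-Hermitian n×n matrix with eigenvalues λ_p ≥ … ≥ λ_1 > μ_1 ≥ … ≥ μ_q, and fix integers 1 ≤ i_1 < i_2 < … < i_m ≤ p. For every flag V_{i_1} ⊂ V_{i_2} ⊂ … ⊂ V_{i_m} of subspaces of ℂⁿ with dim V_{i_j} = i_j and V_{i_m}∖{0} ⊆ ℂⁿ₊, there exists a system x_1, …, x_m subordinate to the flag such that Σ_{j=1}^m x_j†·A·x_j ≥ Σ_{j=1}^m λ_{i_j}. -/

import Mathlib

open Matrix

/-- The signature matrix `J = diag(1,…,1,−1,…,−1)` with `p` ones and `q` minus-ones. -/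
noncomputable def Jmat (p q : ℕ) : Matrix (Fin (p + q)) (Fin (p + q)) ℂ :=
  Matrix.diagonal (fun i => if (i : ℕ) < p then 1 else -1)

/-- The indefinite pairing `⟨z,w⟩ = Σ_{i<p} z_i conj(w_i) − Σ_{i≥p} z_i conj(w_i)`;
equivalently `w† · z` where `x† = (J conj(x))ᵀ`. -/
noncomputable def pairing (p q : ℕ) (z w : Fin (p + q) → ℂ) : ℂ :=
  ∑ i : Fin (p + q),
    (if (i : ℕ) < p then z i * (starRingEnd ℂ) (w i) else -(z i * (starRingEnd ℂ) (w i)))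

/-- The diagonal entries of `Λ = diag(λ_p, …, λ_1, μ_1, …, μ_q)`, where `lam` and `mu`
are 0-indexed: `lam i = λ_{i+1}` and `mu j = μ_{j+1}`. -/
noncomputable def diagEntries (p q : ℕ) (lam : Fin p → ℝ) (mu : Fin q → ℝ) :
    Fin (p + q) → ℂ :=
  fun i =>
    if h : (i : ℕ) < p then ((lam ⟨p - 1 - (i : ℕ), by omega⟩ : ℝ) : ℂ)
    else ((mu ⟨(i : ℕ) - p, by have := i.isLt; omega⟩ : ℝ) : ℂ)

section PairingLemmas
variable {p q : ℕ}

lemma pairing_eq_dot (z w : Fin (p + q) → ℂ) :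
    pairing p q z w = star w ⬝ᵥ ((Jmat p q) *ᵥ z) := by
  unfold pairing Jmat dotProduct
  apply Finset.sum_congr rfl
  intro i _
  by_cases h : (i : ℕ) < p <;> simp [h, Matrix.mulVec_diagonal] <;> ring

lemma pairing_add_left (z z' w : Fin (p + q) → ℂ) :
    pairing p q (z + z') w = pairing p q z w + pairing p q z' w := by
  unfold pairing
  rw [← Finset.sum_add_distrib]
  apply Finset.sum_congr rfl
  intro i _
  by_cases h : (i : ℕ) < p <;> simp [h] <;> ring

lemma pairing_smul_left (c : ℂ) (z w : Fin (p + q) → ℂ) :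
    pairing p q (c • z) w = c * pairing p q z w := by
  unfold pairing
  rw [Finset.mul_sum]
  apply Finset.sum_congr rfl
  intro i _
  by_cases h : (i : ℕ) < p <;> simp [h] <;> ring

lemma pairing_conj (z w : Fin (p + q) → ℂ) :
    (starRingEnd ℂ) (pairing p q z w) = pairing p q w z := by
  unfold pairing
  rw [map_sum]
  apply Finset.sum_congr rfl
  intro i _
  by_cases h : (i : ℕ) < p <;> simp [h] <;> ring

lemma pairing_add_right (z w w' : Fin (p + q) → ℂ) :
    pairing p q z (w + w') = pairing p q z w + pairing p q z w' := by
  rw [← pairing_conj, pairing_add_left, map_add, pairing_conj, pairing_conj]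

lemma pairing_smul_right (c : ℂ) (z w : Fin (p + q) → ℂ) :
    pairing p q z (c • w) = (starRingEnd ℂ) c * pairing p q z w := by
  rw [← pairing_conj, pairing_smul_left, _root_.map_mul, pairing_conj]

/-- left-linear functional `z ↦ pairing z w`. -/
noncomputable def pairingL (p q : ℕ) (w : Fin (p + q) → ℂ) :
    (Fin (p + q) → ℂ) →ₗ[ℂ] ℂ where
  toFun z := pairing p q z w
  map_add' a b := pairing_add_left a b w
  map_smul' c a := pairing_smul_left c a w

@[simp] lemma pairingL_apply (w z : Fin (p + q) → ℂ) :
    pairingL p q w z = pairing p q z w := rfl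

lemma pairing_sum_left {ι : Type*} (s : Finset ι) (f : ι → Fin (p + q) → ℂ)
    (w : Fin (p + q) → ℂ) :
    pairing p q (∑ i ∈ s, f i) w = ∑ i ∈ s, pairing p q (f i) w := by
  exact map_sum (pairingL p q w) f s

lemma pairing_sum_right {ι : Type*} (s : Finset ι) (f : ι → Fin (p + q) → ℂ)
    (z : Fin (p + q) → ℂ) :
    pairing p q z (∑ i ∈ s, f i) = ∑ i ∈ s, pairing p q z (f i) := by
  rw [← pairing_conj, pairing_sum_left, map_sum]
  exact Finset.sum_congr rfl fun i _ => pairing_conj _ _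

lemma pairing_self_eq_re (z : Fin (p + q) → ℂ) :
    pairing p q z z = ((pairing p q z z).re : ℂ) := by
  have h := pairing_conj z z
  exact (Complex.conj_eq_iff_re.mp h).symm

end PairingLemmas

section Supp
variable {p q : ℕ}

/-- Submodule of vectors supported in `S`. -/
noncomputable def suppSub (p q : ℕ) (S : Set (Fin (p + q))) : Submodule ℂ (Fin (p + q) → ℂ) where
  carrier := {c | ∀ i, i ∉ S → c i = 0}
  add_mem' := by intro a b ha hb i hi; simp [ha i hi, hb i hi]
  zero_mem' := by intro i hi; rfl
  smul_mem' := by intro c a ha i hi; simp [ha i hi]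

lemma mem_suppSub {S : Set (Fin (p + q))} {c : Fin (p + q) → ℂ} :
    c ∈ suppSub p q S ↔ ∀ i, i ∉ S → c i = 0 := Iff.rfl

/-- a linearly independent family inside a submodule bounds its finrank below -/
lemma le_finrank_of_linearIndependent {k : ℕ} {W : Submodule ℂ (Fin (p + q) → ℂ)}
    (v : Fin k → Fin (p + q) → ℂ) (hli : LinearIndependent ℂ v) (hv : ∀ j, v j ∈ W) :
    k ≤ Module.finrank ℂ W := by
  have h1 : Submodule.span ℂ (Set.range v) ≤ W := by
    rw [Submodule.span_le]; rintro _ ⟨j, rfl⟩; exact hv j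
  have h2 : Module.finrank ℂ (Submodule.span ℂ (Set.range v)) = k := by
    rw [finrank_span_eq_card hli, Fintype.card_fin]
  calc k = _ := h2.symm
    _ ≤ _ := Submodule.finrank_mono h1
end Supp

section MatrixIds
variable {p q : ℕ} {U : Matrix (Fin (p + q)) (Fin (p + q)) ℂ}

lemma Jmat_mul_Jmat : Jmat p q * Jmat p q = 1 := by
  unfold Jmat
  rw [Matrix.diagonal_mul_diagonal]
  ext i j
  by_cases h : i = j
  · subst h
    by_cases hp : (i : ℕ) < p <;> simp [Matrix.diagonal_apply, Matrix.one_apply, hp]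
  · simp [Matrix.diagonal_apply, Matrix.one_apply, h]

lemma conjT_J_mul (hunit : IsUnit U) (hUJ : U * Jmat p q * U.conjTranspose = Jmat p q) :
    U.conjTranspose * Jmat p q * U = Jmat p q := by
  have hJJ := Jmat_mul_Jmat (p := p) (q := q)
  have h1 : U * (Jmat p q * (Uᴴ * Jmat p q)) = 1 := by
    have h : U * Jmat p q * Uᴴ * Jmat p q = 1 := by rw [hUJ, hJJ]
    simpa [Matrix.mul_assoc] using h
  have h2 : Jmat p q * (Uᴴ * (Jmat p q * U)) = 1 := by
    have h := mul_eq_one_comm.mp h1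
    simpa [Matrix.mul_assoc] using h
  have h3 : Jmat p q * (Jmat p q * (Uᴴ * (Jmat p q * U))) = Jmat p q := by
    rw [h2, Matrix.mul_one]
  have h4 : Uᴴ * (Jmat p q * U) = Jmat p q := by
    have h : (Jmat p q * Jmat p q) * (Uᴴ * (Jmat p q * U)) = Jmat p q := by
      simpa [Matrix.mul_assoc] using h3
    rwa [hJJ, Matrix.one_mul] at h
  simpa [Matrix.mul_assoc] using h4

lemma pairing_mulVec (hunit : IsUnit U) (hUJ : U * Jmat p q * U.conjTranspose = Jmat p q)
    (c c' : Fin (p + q) → ℂ) :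
    pairing p q (U *ᵥ c) (U *ᵥ c') = pairing p q c c' := by
  have key := conjT_J_mul hunit hUJ
  rw [pairing_eq_dot, pairing_eq_dot, Matrix.star_mulVec, Matrix.mulVec_mulVec]
  simp only [Matrix.dotProduct_mulVec]
  rw [Matrix.vecMul_vecMul,
    show Uᴴ * (Jmat p q * U) = Jmat p q from by simpa [Matrix.mul_assoc] using key]

lemma mulVec_A (A D : Matrix (Fin (p + q)) (Fin (p + q)) ℂ) (hunit : IsUnit U)
    (hAeq : A = U * D * U⁻¹) (c : Fin (p + q) → ℂ) :
    A *ᵥ (U *ᵥ c) = U *ᵥ (D *ᵥ c) := by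
  have hdet : IsUnit U.det := (Matrix.isUnit_iff_isUnit_det U).mp hunit
  have hAU : A * U = U * D := by
    rw [hAeq, Matrix.mul_assoc, Matrix.mul_assoc, Matrix.nonsing_inv_mul U hdet,
      Matrix.mul_one]
  rw [Matrix.mulVec_mulVec, Matrix.mulVec_mulVec, hAU]

end MatrixIds

section GsubSec
variable {p q : ℕ}

def posSet (p q t : ℕ) : Set (Fin (p + q)) := {i | (i : ℕ) + t + 1 ≤ p ∨ p ≤ (i : ℕ)}

noncomputable def Gsub (p q : ℕ) (U : Matrix (Fin (p + q)) (Fin (p + q)) ℂ) (t : ℕ) :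
    Submodule ℂ (Fin (p + q) → ℂ) :=
  (suppSub p q (posSet p q t)).map (Matrix.mulVecLin U)

lemma mulVec_injective {U : Matrix (Fin (p + q)) (Fin (p + q)) ℂ} (hunit : IsUnit U) :
    Function.Injective (fun c => U *ᵥ c : (Fin (p + q) → ℂ) → (Fin (p + q) → ℂ)) := by
  have hdet : IsUnit U.det := (Matrix.isUnit_iff_isUnit_det U).mp hunit
  intro a b hab
  have h := congrArg (fun v => U⁻¹ *ᵥ v) hab
  simpa [Matrix.mulVec_mulVec, Matrix.nonsing_inv_mul U hdet] using h

lemma finrank_Gsub_ge {U : Matrix (Fin (p + q)) (Fin (p + q)) ℂ} (hunit : IsUnit U)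
    {t : ℕ} (ht : t < p) :
    p - t + q ≤ Module.finrank ℂ (Gsub p q U t) := by
  set f : Fin (p - t + q) → Fin (p + q) := fun j =>
    ⟨if (j : ℕ) < p - t then (j : ℕ) else (j : ℕ) + t, by
      have := j.isLt; split <;> omega⟩ with hf
  have hfmem : ∀ j, f j ∈ posSet p q t := by
    intro j
    have := j.isLt
    simp only [hf, posSet, Set.mem_setOf_eq]
    split <;> omega
  have hfinj : Function.Injective f := by
    intro a b hab
    have ha := a.isLt; have hb := b.isLt
    apply Fin.ext
    have h := congrArg (fun x : Fin (p + q) => (x : ℕ)) hab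
    simp only [hf] at h
    split at h <;> split at h <;> omega
  apply le_finrank_of_linearIndependent (v := fun j => U *ᵥ Pi.single (f j) 1)
  · have hbase : LinearIndependent ℂ
        (fun j : Fin (p - t + q) => (Pi.single (f j) 1 : Fin (p + q) → ℂ)) := by
      have h2 := (Pi.basisFun ℂ (Fin (p + q))).linearIndependent.comp f hfinj
      have he : (fun j : Fin (p - t + q) => (Pi.single (f j) 1 : Fin (p + q) → ℂ))
          = (⇑(Pi.basisFun ℂ (Fin (p + q))) ∘ f) := by
        funext j; simp [Pi.basisFun_apply]
      rw [he]; exact h2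
    have hker : LinearMap.ker (Matrix.mulVecLin U) = ⊥ := by
      rw [LinearMap.ker_eq_bot]
      exact mulVec_injective hunit
    have := hbase.map' (Matrix.mulVecLin U) hker
    exact this
  · intro j
    refine Submodule.mem_map_of_mem ?_
    intro i hi
    refine Pi.single_eq_of_ne ?_ 1
    intro hij
    exact hi (hij ▸ hfmem j)

end GsubSec

section Rayleigh
variable {p q : ℕ}

open Finset in
lemma rayleigh_bound (hp : 0 < p) (hq : 0 < q)
    (A U : Matrix (Fin (p + q)) (Fin (p + q)) ℂ)
    (lam : Fin p → ℝ) (mu : Fin q → ℝ)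
    (hlam : Monotone lam) (hmu : Antitone mu) (hlm : mu ⟨0, hq⟩ < lam ⟨0, hp⟩)
    (hunit : IsUnit U) (hUJ : U * Jmat p q * U.conjTranspose = Jmat p q)
    (hAeq : A = U * Matrix.diagonal (diagEntries p q lam mu) * U⁻¹)
    (t : Fin p) (z : Fin (p + q) → ℂ) (hz : z ∈ Gsub p q U (t : ℕ))
    (hz1 : pairing p q z z = 1) :
    (lam t : ℝ) ≤ (pairing p q (A *ᵥ z) z).re := by
  obtain ⟨c, hc, rfl⟩ := hz
  set d := diagEntries p q lam mu with hd
  have hcz : (Matrix.mulVecLin U) c = U *ᵥ c := rfl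
  rw [hcz] at hz1 ⊢
  have h1 : pairing p q c c = 1 := by
    rw [← pairing_mulVec hunit hUJ c c]; exact hz1
  rw [mulVec_A A (Matrix.diagonal d) hunit hAeq c,
    pairing_mulVec hunit hUJ]
  -- compute pairing (D *ᵥ c) c
  have hDc : pairing p q ((Matrix.diagonal d) *ᵥ c) c
      = ∑ i : Fin (p + q), (if (i : ℕ) < p then d i * (c i * (starRingEnd ℂ) (c i))
          else -(d i * (c i * (starRingEnd ℂ) (c i)))) := by
    unfold pairing
    refine Finset.sum_congr rfl fun i _ => ?_
    rw [Matrix.mulVec_diagonal]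
    split <;> ring
  rw [hDc, Complex.re_sum]
  set Pr : ℝ := ∑ i ∈ univ.filter (fun i : Fin (p + q) => (i : ℕ) < p),
      Complex.normSq (c i) with hPr
  set Nr : ℝ := ∑ i ∈ univ.filter (fun i : Fin (p + q) => ¬ (i : ℕ) < p),
      Complex.normSq (c i) with hNr
  have hNnn : 0 ≤ Nr := Finset.sum_nonneg fun i _ => Complex.normSq_nonneg _
  -- the normalization: Pr - Nr = 1
  have hnorm : Pr - Nr = 1 := by
    have h2 : (pairing p q c c).re = Pr - Nr := by
      unfold pairing
      rw [Complex.re_sum]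
      have : ∀ i : Fin (p + q),
          (if (i : ℕ) < p then c i * (starRingEnd ℂ) (c i)
            else -(c i * (starRingEnd ℂ) (c i))).re
          = (if (i : ℕ) < p then Complex.normSq (c i) else -(Complex.normSq (c i))) := by
        intro i
        split <;> simp [Complex.mul_conj]
      rw [Finset.sum_congr rfl fun i _ => this i, Finset.sum_ite,
        Finset.sum_neg_distrib, ← hPr, ← hNr]
      ring
    rw [h1] at h2
    simp only [Complex.one_re] at h2
    linarith [h2]
  -- pointwise lower bound
  have hptw : ∀ i : Fin (p + q),
      (if (i : ℕ) < p then lam t * Complex.normSq (c i)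
        else -(mu ⟨0, hq⟩ * Complex.normSq (c i)))
      ≤ (if (i : ℕ) < p then d i * (c i * (starRingEnd ℂ) (c i))
          else -(d i * (c i * (starRingEnd ℂ) (c i)))).re := by
    intro i
    by_cases h : (i : ℕ) < p
    · simp only [h, if_true]
      have hdv : d i = ((lam ⟨p - 1 - (i : ℕ), by omega⟩ : ℝ) : ℂ) := by
        simp [hd, diagEntries, h]
      rw [Complex.mul_conj, hdv, ← Complex.ofReal_mul, Complex.ofReal_re]
      by_cases hc0 : c i = 0
      · simp [hc0]
      · have hmem : i ∈ posSet p q (t : ℕ) := by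
          by_contra hmem
          exact hc0 (hc i hmem)
        have hi : (i : ℕ) + (t : ℕ) + 1 ≤ p := by
          rcases hmem with h' | h'
          · exact h'
          · omega
        have hle : lam t ≤ lam ⟨p - 1 - (i : ℕ), by omega⟩ := by
          apply hlam
          rw [Fin.le_def]
          simp
          omega
        exact mul_le_mul_of_nonneg_right hle (Complex.normSq_nonneg _)
    · simp only [h, if_false]
      have hdv : d i = ((mu ⟨(i : ℕ) - p, by have := i.isLt; omega⟩ : ℝ) : ℂ) := by
        simp [hd, diagEntries, h]
      rw [Complex.mul_conj, hdv, ← Complex.ofReal_mul, ← Complex.ofReal_neg,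
        Complex.ofReal_re]
      have hle : mu ⟨(i : ℕ) - p, by have := i.isLt; omega⟩ ≤ mu ⟨0, hq⟩ := by
        apply hmu
        rw [Fin.le_def]
        simp
      have := mul_le_mul_of_nonneg_right hle (Complex.normSq_nonneg (c i))
      linarith
  have hsum : lam t * Pr - mu ⟨0, hq⟩ * Nr
      ≤ ∑ i : Fin (p + q), (if (i : ℕ) < p then d i * (c i * (starRingEnd ℂ) (c i))
          else -(d i * (c i * (starRingEnd ℂ) (c i)))).re := by
    have h3 := Finset.sum_le_sum (s := Finset.univ) (fun i (_ : i ∈ Finset.univ) => hptw i)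
    calc lam t * Pr - mu ⟨0, hq⟩ * Nr
        = ∑ i : Fin (p + q), (if (i : ℕ) < p then lam t * Complex.normSq (c i)
            else -(mu ⟨0, hq⟩ * Complex.normSq (c i))) := by
          rw [Finset.sum_ite, ← Finset.mul_sum, ← hPr, Finset.sum_neg_distrib,
            ← Finset.mul_sum, ← hNr]
          ring
      _ ≤ _ := h3
  have hlt : lam ⟨0, hp⟩ ≤ lam t := by
    apply hlam
    rw [Fin.le_def]
    simp
  have hexp : lam t * Pr = lam t + lam t * Nr := by
    have hPN : Pr = 1 + Nr := by linarith
    rw [hPN]; ring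
  have h5 : mu ⟨0, hq⟩ * Nr ≤ lam t * Nr :=
    mul_le_mul_of_nonneg_right (by linarith) hNnn
  linarith [hsum, hexp, h5]

end Rayleigh

section Pick
variable {p q : ℕ}

lemma exists_unit_orth (W : Submodule ℂ (Fin (p + q) → ℂ))
    (hpos : ∀ x ∈ W, x ≠ 0 → 0 < (pairing p q x x).re)
    (r : ℕ) (z : Fin r → Fin (p + q) → ℂ) (hr : r < Module.finrank ℂ W) :
    ∃ x ∈ W, pairing p q x x = 1 ∧ (∀ i, pairing p q x (z i) = 0) ∧
      (∀ i, pairing p q (z i) x = 0) := by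
  set L : W →ₗ[ℂ] (Fin r → ℂ) :=
    LinearMap.pi (fun i => (pairingL p q (z i)).comp W.subtype) with hL
  have hker : LinearMap.ker L ≠ ⊥ := by
    intro hbot
    have hinj : Function.Injective L := LinearMap.ker_eq_bot.mp hbot
    have := LinearMap.finrank_le_finrank_of_injective hinj
    rw [Module.finrank_fintype_fun_eq_card, Fintype.card_fin] at this
    omega
  obtain ⟨w, hwker, hwne⟩ := Submodule.exists_mem_ne_zero_of_ne_bot hker
  have hw0 : ∀ i, pairing p q (w : Fin (p + q) → ℂ) (z i) = 0 := by
    intro i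
    have h := LinearMap.mem_ker.mp hwker
    have h2 := congrFun h i
    simpa [hL, pairingL] using h2
  have hwne' : (w : Fin (p + q) → ℂ) ≠ 0 := by
    intro h
    exact hwne (Subtype.ext h)
  set t0 : ℝ := (pairing p q (w : Fin (p + q) → ℂ) (w : Fin (p + q) → ℂ)).re with ht0d
  have ht0 : 0 < t0 := hpos _ w.2 hwne'
  set a : ℝ := (Real.sqrt t0)⁻¹ with ha
  have hs : Real.sqrt t0 ≠ 0 := ne_of_gt (Real.sqrt_pos.mpr ht0)
  have hone : a * (a * t0) = 1 := by
    have h1 : Real.sqrt t0 * Real.sqrt t0 = t0 := Real.mul_self_sqrt ht0.le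
    rw [ha]
    field_simp
    rw [sq, h1]
  refine ⟨(a : ℂ) • (w : Fin (p + q) → ℂ), W.smul_mem _ w.2, ?_, ?_, ?_⟩
  · rw [pairing_smul_left, pairing_smul_right, Complex.conj_ofReal,
      pairing_self_eq_re (w : Fin (p + q) → ℂ), ← ht0d, ← Complex.ofReal_mul,
      ← Complex.ofReal_mul, hone, Complex.ofReal_one]
  · intro i
    rw [pairing_smul_left, hw0 i, mul_zero]
  · intro i
    rw [pairing_smul_right]
    have : pairing p q (z i) (w : Fin (p + q) → ℂ) = 0 := by
      rw [← pairing_conj, hw0 i, map_zero]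
    rw [this, mul_zero]

lemma chainPick (m : ℕ) (P : Fin m → Submodule ℂ (Fin (p + q) → ℂ))
    (hpos : ∀ k, ∀ x ∈ P k, x ≠ 0 → 0 < (pairing p q x x).re)
    (hd : ∀ k : Fin m, (k : ℕ) + 1 ≤ Module.finrank ℂ (P k)) :
    ∃ z : Fin m → Fin (p + q) → ℂ, (∀ k, z k ∈ P k) ∧
      ∀ j k, pairing p q (z j) (z k) = if j = k then 1 else 0 := by
  induction m with
  | zero => exact ⟨fun k => 0, fun k => k.elim0, fun j k => j.elim0⟩
  | succ m ih =>
    obtain ⟨z', hz'mem, hz'orth⟩ := ih (fun k => P k.castSucc)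
      (fun k x hx => hpos _ x hx) (fun k => hd k.castSucc)
    have hlast : m < Module.finrank ℂ (P (Fin.last m)) := by
      have := hd (Fin.last m)
      simpa using this
    obtain ⟨x, hxmem, hx1, hxz, hzx⟩ :=
      exists_unit_orth (P (Fin.last m)) (hpos _) m z' hlast
    refine ⟨Fin.lastCases x z', ?_, ?_⟩
    · intro k
      refine Fin.lastCases ?_ ?_ k
      · simpa using hxmem
      · intro i
        simpa using hz'mem i
    · intro j k
      refine Fin.lastCases ?_ ?_ j
      · refine Fin.lastCases ?_ ?_ k
        · simp [hx1]
        · intro k'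
          have hne : Fin.last m ≠ k'.castSucc := (Fin.castSucc_lt_last k').ne'
          simp [hne, hxz k']
      · intro j'
        refine Fin.lastCases ?_ ?_ k
        · have hne : j'.castSucc ≠ Fin.last m := (Fin.castSucc_lt_last j').ne
          simp [hne, hzx j']
        · intro k'
          simp only [Fin.lastCases_castSucc]
          rw [hz'orth j' k']
          simp [Fin.castSucc_inj]

end Pick

section Greedy
variable {p q : ℕ}

lemma finrank_inf_ge (V W : Submodule ℂ (Fin (p + q) → ℂ)) :
    Module.finrank ℂ V + Module.finrank ℂ W ≤ (p + q) + Module.finrank ℂ (V ⊓ W : Submodule ℂ _) := by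
  have h := Submodule.finrank_sup_add_finrank_inf_eq V W
  have h2 : Module.finrank ℂ (V ⊔ W : Submodule ℂ _) ≤ p + q := by
    have h3 := Submodule.finrank_le (V ⊔ W : Submodule ℂ (Fin (p + q) → ℂ))
    rwa [Module.finrank_fintype_fun_eq_card, Fintype.card_fin] at h3
  omega

lemma finrank_sup_singleton {W : Submodule ℂ (Fin (p + q) → ℂ)}
    {y : Fin (p + q) → ℂ} (hyW : y ∉ W) (hy0 : y ≠ 0) :
    Module.finrank ℂ (W ⊔ (ℂ ∙ y) : Submodule ℂ _) = Module.finrank ℂ W + 1 := by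
  have hinf : W ⊓ (ℂ ∙ y) = ⊥ := by
    rw [eq_bot_iff]
    rintro x ⟨hxW, hxy⟩
    obtain ⟨c, rfl⟩ := Submodule.mem_span_singleton.mp hxy
    rcases eq_or_ne c 0 with rfl | hc
    · simp
    · exfalso
      apply hyW
      have : c⁻¹ • (c • y) ∈ W := W.smul_mem _ hxW
      rwa [smul_smul, inv_mul_cancel₀ hc, one_smul] at this
  have h := Submodule.finrank_sup_add_finrank_inf_eq W (ℂ ∙ y)
  rw [hinf, finrank_span_singleton hy0] at h
  simpa using h

lemma greedy (m : ℕ) (hm : 0 < m) (V G : ℕ → Submodule ℂ (Fin (p + q) → ℂ))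
    (hVmono : ∀ a b, a ≤ b → b < m → V a ≤ V b)
    (hGanti : ∀ a b, a ≤ b → b < m → G b ≤ G a)
    (hVG : ∀ j k, k ≤ j → j < m →
      j - k + 1 ≤ Module.finrank ℂ (V j ⊓ G k : Submodule ℂ _)) :
    ∃ T : Submodule ℂ (Fin (p + q) → ℂ), Module.finrank ℂ T = m ∧ T ≤ V (m - 1) ∧
      (∀ t, t < m → t + 1 ≤ Module.finrank ℂ (T ⊓ V t : Submodule ℂ _)) ∧
      (∀ k, k < m → m - k ≤ Module.finrank ℂ (T ⊓ G k : Submodule ℂ _)) := by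
  classical
  have main : ∀ j, j ≤ m → ∃ S : Submodule ℂ (Fin (p + q) → ℂ),
      Module.finrank ℂ S = j ∧
      (∀ t, t < m → j ≤ t + 1 → S ≤ V t) ∧
      (∀ t, t < m → t < j → t + 1 ≤ Module.finrank ℂ (S ⊓ V t : Submodule ℂ _)) ∧
      (∀ k, k < m → j - k ≤ Module.finrank ℂ (S ⊓ G k : Submodule ℂ _)) := by
    intro j
    induction j with
    | zero =>
      intro _
      refine ⟨⊥, finrank_bot ℂ _, fun t _ _ => bot_le, by omega, ?_⟩
      intro k _
      simp
    | succ j ih =>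
      intro hj1
      have hjm : j < m := by omega
      obtain ⟨S, hSrank, hSle, hSV, hSG⟩ := ih (by omega)
      set Pred : ℕ → Prop := fun k => k < m ∧ ¬ (V j ⊓ G k ≤ S) with hPred
      have hP0 : Pred 0 := by
        refine ⟨hm, ?_⟩
        intro hle
        have h1 := Submodule.finrank_mono hle
        have h2 := hVG j 0 (Nat.zero_le j) hjm
        omega
      set κ := Nat.findGreatest Pred m with hκ
      have hκP : Pred κ := Nat.findGreatest_spec (Nat.zero_le m) hP0
      have hκmax : ∀ k, κ < k → k ≤ m → ¬ Pred k := by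
        intro k hk hkm hPk
        exact absurd (Nat.le_findGreatest hkm hPk) (not_le.mpr hk)
      obtain ⟨y, hyVG, hyS⟩ := SetLike.not_le_iff_exists.mp hκP.2
      have hy0 : y ≠ 0 := fun h => hyS (h ▸ S.zero_mem)
      set S' := S ⊔ (ℂ ∙ y) with hS'
      have hS'rank : Module.finrank ℂ S' = j + 1 := by
        rw [hS', finrank_sup_singleton hyS hy0, hSrank]
      have hSS' : S ≤ S' := le_sup_left
      have hyS' : y ∈ S' := by
        apply Submodule.mem_sup_right
        exact Submodule.mem_span_singleton_self y
      have hS'le : ∀ t, t < m → j + 1 ≤ t + 1 → S' ≤ V t := by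
        intro t htm hjt
        apply sup_le
        · exact hSle t htm (by omega)
        · rw [Submodule.span_singleton_le_iff_mem]
          exact hVmono j t (by omega) htm hyVG.1
      refine ⟨S', hS'rank, hS'le, ?_, ?_⟩
      · intro t htm htj
        rcases Nat.lt_or_ge t j with ht | ht
        · exact le_trans (hSV t htm ht) (Submodule.finrank_mono (inf_le_inf_right _ hSS'))
        · have htj' : t = j := by omega
          subst htj'
          have : S' ⊓ V t = S' := inf_eq_left.mpr (hS'le t htm (le_refl _))
          rw [this, hS'rank]
      · intro k hkm
        by_cases hk : k ≤ κ
        · have hyGk : y ∈ G k := hGanti k κ hk hκP.1 hyVG.2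
          have hySGk : y ∉ (S ⊓ G k : Submodule ℂ _) := fun h => hyS h.1
          have hle2 : (S ⊓ G k : Submodule ℂ _) ⊔ (ℂ ∙ y) ≤ S' ⊓ G k := by
            apply sup_le
            · exact inf_le_inf_right _ hSS'
            · rw [Submodule.span_singleton_le_iff_mem]
              exact ⟨hyS', hyGk⟩
          have h3 := Submodule.finrank_mono hle2
          rw [finrank_sup_singleton hySGk hy0] at h3
          have h4 := hSG k hkm
          omega
        · push_neg at hk
          rcases Nat.lt_or_ge j k with hjk | hjk
          · have : j + 1 - k = 0 := by omega
            rw [this]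
            exact Nat.zero_le _
          · have hnP := hκmax k hk (by omega)
            rw [hPred] at hnP
            have hVjGk : V j ⊓ G k ≤ S := by
              by_contra hcon
              exact hnP ⟨hkm, hcon⟩
            have hle3 : V j ⊓ G k ≤ S' ⊓ G k :=
              le_trans (le_inf hVjGk inf_le_right) (inf_le_inf_right _ hSS')
            have h3 := Submodule.finrank_mono hle3
            have h4 := hVG j k hjk hjm
            omega
  obtain ⟨T, hT1, hT2, hT3, hT4⟩ := main m (le_refl m)
  exact ⟨T, hT1, hT2 (m - 1) (by omega) (by omega),
    fun t htm => hT3 t htm htm, hT4⟩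

end Greedy

section OrthBasis
variable {p q : ℕ}

lemma pairing_zero_left (w : Fin (p + q) → ℂ) : pairing p q 0 w = 0 :=
  (pairingL p q w).map_zero

lemma pairing_sub_left (a b w : Fin (p + q) → ℂ) :
    pairing p q (a - b) w = pairing p q a w - pairing p q b w :=
  (pairingL p q w).map_sub a b

lemma pairing_sum_smul (m : ℕ) (g : Fin m → ℂ) (x : Fin m → Fin (p + q) → ℂ)
    (w : Fin (p + q) → ℂ) :
    pairing p q (∑ i, g i • x i) w = ∑ i, g i * pairing p q (x i) w := by
  rw [pairing_sum_left]
  exact Finset.sum_congr rfl fun i _ => pairing_smul_left _ _ _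

lemma orth_linearIndependent (m : ℕ) (x : Fin m → Fin (p + q) → ℂ)
    (horth : ∀ j k, pairing p q (x j) (x k) = if j = k then 1 else 0) :
    LinearIndependent ℂ x := by
  rw [Fintype.linearIndependent_iff]
  intro g hg j
  have h2 : pairing p q (∑ i, g i • x i) (x j) = g j := by
    rw [pairing_sum_smul]
    rw [Finset.sum_congr rfl fun i (_ : i ∈ Finset.univ) => by rw [horth i j]]
    simp
  rw [hg, pairing_zero_left] at h2
  exact h2.symm

lemma orth_expansion (m : ℕ) (T : Submodule ℂ (Fin (p + q) → ℂ))
    (hrank : Module.finrank ℂ T = m)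
    (hpos : ∀ x ∈ T, x ≠ 0 → 0 < (pairing p q x x).re)
    (x : Fin m → Fin (p + q) → ℂ) (hxT : ∀ j, x j ∈ T)
    (horth : ∀ j k, pairing p q (x j) (x k) = if j = k then 1 else 0) :
    ∀ w ∈ T, w = ∑ j, pairing p q w (x j) • x j := by
  have hli := orth_linearIndependent m x horth
  have hspan : Submodule.span ℂ (Set.range x) = T := by
    apply Submodule.eq_of_le_of_finrank_le
    · rw [Submodule.span_le]
      rintro _ ⟨j, rfl⟩
      exact hxT j
    · rw [hrank, finrank_span_eq_card hli, Fintype.card_fin]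
  intro w hw
  set w' := w - ∑ j, pairing p q w (x j) • x j with hw'
  have hw'T : w' ∈ T :=
    T.sub_mem hw (Submodule.sum_mem _ fun j _ => T.smul_mem _ (hxT j))
  have hw'orth : ∀ k, pairing p q w' (x k) = 0 := by
    intro k
    rw [hw', pairing_sub_left, pairing_sum_smul]
    rw [Finset.sum_congr rfl fun j (_ : j ∈ Finset.univ) => by rw [horth j k]]
    simp
  have hw'mem : w' ∈ Submodule.span ℂ (Set.range x) := by rw [hspan]; exact hw'T
  obtain ⟨e, he⟩ := (Submodule.mem_span_range_iff_exists_fun ℂ).mp hw'mem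
  have hww : pairing p q w' w' = 0 := by
    have hrw : pairing p q w' w' = pairing p q w' (∑ i, e i • x i) := by rw [he]
    rw [hrw, pairing_sum_right]
    rw [Finset.sum_congr rfl fun j (_ : j ∈ Finset.univ) => pairing_smul_right _ _ _]
    rw [Finset.sum_congr rfl fun j (_ : j ∈ Finset.univ) => by rw [hw'orth j, mul_zero]]
    exact Finset.sum_const_zero
  have hz : w' = 0 := by
    by_contra h0
    have := hpos w' hw'T h0
    rw [hww] at this
    simp at this
  have := sub_eq_zero.mp hz
  exact this

lemma trace_invariance (m : ℕ) (A : Matrix (Fin (p + q)) (Fin (p + q)) ℂ)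
    (T : Submodule ℂ (Fin (p + q) → ℂ)) (hrank : Module.finrank ℂ T = m)
    (hpos : ∀ x ∈ T, x ≠ 0 → 0 < (pairing p q x x).re)
    (x z : Fin m → Fin (p + q) → ℂ) (hxT : ∀ j, x j ∈ T) (hzT : ∀ k, z k ∈ T)
    (horthx : ∀ j k, pairing p q (x j) (x k) = if j = k then 1 else 0)
    (horthz : ∀ j k, pairing p q (z j) (z k) = if j = k then 1 else 0) :
    ∑ k, pairing p q (A *ᵥ z k) (z k) = ∑ j, pairing p q (A *ᵥ x j) (x j) := by
  set M : Matrix (Fin m) (Fin m) ℂ :=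
    Matrix.of (fun k j => pairing p q (z k) (x j)) with hM
  have hexp : ∀ k, z k = ∑ j, M k j • x j := fun k =>
    orth_expansion m T hrank hpos x hxT horthx (z k) (hzT k)
  have hcross : ∀ j l, pairing p q (x j) (z l) = (starRingEnd ℂ) (M l j) := by
    intro j l
    rw [← pairing_conj]
    rfl
  have hMMH : M * Mᴴ = 1 := by
    ext k l
    rw [Matrix.mul_apply, Matrix.one_apply]
    have h1 : pairing p q (z k) (z l) = ∑ j, M k j * (starRingEnd ℂ) (M l j) := by
      conv_lhs => rw [hexp k]
      rw [pairing_sum_smul]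
      exact Finset.sum_congr rfl fun j _ => by rw [hcross j l]
    rw [← horthz k l, h1]
    exact Finset.sum_congr rfl fun j _ => by
      rw [Matrix.conjTranspose_apply, starRingEnd_apply]
  have hMHM : Mᴴ * M = 1 := mul_eq_one_comm.mp hMMH
  set Q : Matrix (Fin m) (Fin m) ℂ :=
    Matrix.of (fun j j' => pairing p q (A *ᵥ x j) (x j')) with hQ
  have hAz : ∀ k, A *ᵥ z k = ∑ j, M k j • (A *ᵥ x j) := by
    intro k
    conv_lhs => rw [hexp k]
    rw [show A *ᵥ (∑ j, M k j • x j) = Matrix.mulVecLin A (∑ j, M k j • x j) from rfl,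
      map_sum]
    exact Finset.sum_congr rfl fun j _ => by
      rw [_root_.map_smul]
      rfl
  have hterm : ∀ k, pairing p q (A *ᵥ z k) (z k) = (M * Q * Mᴴ) k k := by
    intro k
    rw [hAz k, pairing_sum_smul]
    have h2 : ∀ j, pairing p q (A *ᵥ x j) (z k)
        = ∑ j', (starRingEnd ℂ) (M k j') * Q j j' := by
      intro j
      conv_lhs => rw [hexp k]
      rw [pairing_sum_right]
      exact Finset.sum_congr rfl fun j' _ => by
        rw [pairing_smul_right]
        rfl
    rw [Finset.sum_congr rfl fun j (_ : j ∈ Finset.univ) => by rw [h2 j]]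
    calc ∑ j, M k j * (∑ j', (starRingEnd ℂ) (M k j') * Q j j')
        = ∑ j, ∑ j', M k j * ((starRingEnd ℂ) (M k j') * Q j j') :=
          Finset.sum_congr rfl fun j _ => Finset.mul_sum _ _ _
      _ = ∑ j', ∑ j, M k j * ((starRingEnd ℂ) (M k j') * Q j j') := Finset.sum_comm
      _ = ∑ j', (∑ j, M k j * Q j j') * (starRingEnd ℂ) (M k j') := by
          refine Finset.sum_congr rfl fun j' _ => ?_
          rw [Finset.sum_mul]
          exact Finset.sum_congr rfl fun j _ => by ring
      _ = (M * Q * Mᴴ) k k := by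
          rw [Matrix.mul_apply]
          refine Finset.sum_congr rfl fun j' _ => ?_
          rw [Matrix.mul_apply, Matrix.conjTranspose_apply, starRingEnd_apply]
  calc ∑ k, pairing p q (A *ᵥ z k) (z k)
      = ∑ k, (M * Q * Mᴴ) k k := Finset.sum_congr rfl fun k _ => hterm k
    _ = Matrix.trace (M * Q * Mᴴ) := rfl
    _ = Matrix.trace (Mᴴ * M * Q) := Matrix.trace_mul_cycle M Q Mᴴ
    _ = Matrix.trace Q := by rw [hMHM, one_mul]
    _ = ∑ j, pairing p q (A *ᵥ x j) (x j) := rfl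

end OrthBasis

section IdxLemma

lemma idx_diff {m p : ℕ} (idx : Fin m → Fin p) (hidx : StrictMono idx) :
    ∀ (d : ℕ) (b : Fin m) (hd : (b : ℕ) + d < m),
      (idx b : ℕ) + d ≤ (idx ⟨(b : ℕ) + d, hd⟩ : ℕ) := by
  intro d
  induction d with
  | zero => intro b hd; simp
  | succ d ihd =>
    intro b hd
    have h1 := ihd b (by omega)
    have h2 : (⟨(b : ℕ) + d, by omega⟩ : Fin m) < ⟨(b : ℕ) + d + 1, by omega⟩ := by
      rw [Fin.mk_lt_mk]; omega
    have h3 := hidx h2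
    rw [Fin.lt_def] at h3
    have heq : (⟨(b : ℕ) + (d + 1), hd⟩ : Fin m) = ⟨(b : ℕ) + d + 1, by omega⟩ := rfl
    rw [heq]
    omega

end IdxLemma

/-- `A` is an admissible pseudo-Hermitian matrix with (real) eigenvalues
`λ_p ≥ … ≥ λ_1 > μ_1 ≥ … ≥ μ_q`, recorded 0-indexed as `lam i = λ_{i+1}` (so `lam` is
monotone) and `mu j = μ_{j+1}` (so `mu` is antitone), with `λ_1 > μ_1`, and
`A = U Λ U⁻¹` for some invertible `U` with `U J Uᴴ = J`. -/
def IsAdmissible (p q : ℕ) (hp : 0 < p) (hq : 0 < q)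
    (A : Matrix (Fin (p + q)) (Fin (p + q)) ℂ)
    (lam : Fin p → ℝ) (mu : Fin q → ℝ) : Prop :=
  A * Jmat p q = Jmat p q * A.conjTranspose ∧
  Monotone lam ∧ Antitone mu ∧ mu ⟨0, hq⟩ < lam ⟨0, hp⟩ ∧
  ∃ U : Matrix (Fin (p + q)) (Fin (p + q)) ℂ,
    IsUnit U ∧ U * Jmat p q * U.conjTranspose = Jmat p q ∧
    A = U * Matrix.diagonal (diagEntries p q lam mu) * U⁻¹

/-- The Rayleigh ratio `R_A(x) = (x† A x)/(x† x)`, as a real number (for admissible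
pseudo-Hermitian `A` both `x† A x` and `x† x` are real). -/
noncomputable def rayleigh (p q : ℕ) (A : Matrix (Fin (p + q)) (Fin (p + q)) ℂ)
    (x : Fin (p + q) → ℂ) : ℝ :=
  (pairing p q (A.mulVec x) x).re / (pairing p q x x).re

/-- A flag `V_{i_1} ⊂ V_{i_2} ⊂ ⋯ ⊂ V_{i_m}` of complex subspaces of `ℂⁿ` with
`dim V_{i_j} = i_j` (here `idx : Fin m → Fin p` is 0-indexed, so `i_j = idx j + 1`)
and `V_{i_m} ∖ {0} ⊆ ℂⁿ₊`. -/
def IsFlag (p q m : ℕ) (hm : 0 < m) (idx : Fin m → Fin p)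
    (V : Fin m → Submodule ℂ (Fin (p + q) → ℂ)) : Prop :=
  (∀ j k : Fin m, j < k → V j < V k) ∧
  (∀ j, Module.finrank ℂ (V j) = (idx j : ℕ) + 1) ∧
  (∀ x ∈ V ⟨m - 1, by omega⟩, x ≠ 0 → 0 < (pairing p q x x).re)

/-- A system of vectors `x_1, …, x_m` subordinate to the flag `V`: `x_j ∈ V_{i_j}`
and `⟨x_j, x_k⟩ = δ_{jk}`. -/
def IsSubordinate (p q m : ℕ) (V : Fin m → Submodule ℂ (Fin (p + q) → ℂ))
    (x : Fin m → Fin (p + q) → ℂ) : Prop :=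
  (∀ j, x j ∈ V j) ∧ ∀ j k, pairing p q (x j) (x k) = if j = k then 1 else 0

/-- for every flag `V_{i_1} ⊂ ⋯ ⊂ V_{i_m}` (with `dim V_{i_j} = i_j`
and `V_{i_m}∖{0} ⊆ ℂⁿ₊`) there is a subordinate system `x_1, …, x_m` with
`Σ_j x_j† A x_j ≥ Σ_j λ_{i_j}`. -/
theorem exists_subordinate_system_with_large_sum
    (p q : ℕ) (hp : 0 < p) (hq : 0 < q)
    (A : Matrix (Fin (p + q)) (Fin (p + q)) ℂ)
    (lam : Fin p → ℝ) (mu : Fin q → ℝ)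
    (hA : IsAdmissible p q hp hq A lam mu)
    (m : ℕ) (hm : 0 < m) (idx : Fin m → Fin p) (hidx : StrictMono idx)
    (V : Fin m → Submodule ℂ (Fin (p + q) → ℂ)) (hV : IsFlag p q m hm idx V) :
    ∃ x : Fin m → Fin (p + q) → ℂ, IsSubordinate p q m V x ∧
      ∑ j : Fin m, lam (idx j) ≤
        ∑ j : Fin m, (pairing p q (A.mulVec (x j)) (x j)).re := by
  obtain ⟨hpsh, hlam, hmu, hlm, U, hunit, hUJ, hAeq⟩ := hA
  obtain ⟨hVlt, hVrank, hVpos⟩ := hV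
  have hVmono : ∀ j k : Fin m, j ≤ k → V j ≤ V k := by
    intro j k hjk
    rcases eq_or_lt_of_le hjk with h | h
    · rw [h]
    · exact (hVlt j k h).le
  set top : Fin m := ⟨m - 1, by omega⟩ with htop
  have hVtop : ∀ j : Fin m, V j ≤ V top := by
    intro j
    apply hVmono
    rw [Fin.le_def]
    have := j.isLt
    simp only [htop]
    omega
  have hpos : ∀ x ∈ V top, x ≠ 0 → 0 < (pairing p q x x).re := hVpos
  -- ℕ-indexed families
  set Vn : ℕ → Submodule ℂ (Fin (p + q) → ℂ) :=
    fun t => if h : t < m then V ⟨t, h⟩ else ⊤ with hVn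
  set Gn : ℕ → Submodule ℂ (Fin (p + q) → ℂ) :=
    fun k => if h : k < m then (Gsub p q U ((idx ⟨k, h⟩ : Fin p) : ℕ) ⊓ V top) else ⊤
    with hGn
  -- greedy hypotheses
  have hVmono' : ∀ a b, a ≤ b → b < m → Vn a ≤ Vn b := by
    intro a b hab hbm
    have ham : a < m := by omega
    simp only [hVn, dif_pos ham, dif_pos hbm]
    exact hVmono _ _ (by rw [Fin.le_def]; exact hab)
  have hGanti' : ∀ a b, a ≤ b → b < m → Gn b ≤ Gn a := by
    intro a b hab hbm
    have ham : a < m := by omega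
    simp only [hGn, dif_pos ham, dif_pos hbm]
    apply inf_le_inf_right
    apply Submodule.map_mono
    intro c hc i hi
    apply hc
    intro hi2
    apply hi
    have hle : (idx ⟨a, ham⟩ : ℕ) ≤ (idx ⟨b, hbm⟩ : ℕ) := by
      have : (⟨a, ham⟩ : Fin m) ≤ ⟨b, hbm⟩ := by rw [Fin.le_def]; exact hab
      exact hidx.monotone this
    rcases hi2 with h' | h'
    · left; omega
    · right; exact h'
  have hVG' : ∀ j k, k ≤ j → j < m →
      j - k + 1 ≤ Module.finrank ℂ (Vn j ⊓ Gn k : Submodule ℂ _) := by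
    intro j k hkj hjm
    have hkm : k < m := by omega
    have hVneq : Vn j = V ⟨j, hjm⟩ := dif_pos hjm
    have hGneq : Gn k = Gsub p q U ((idx ⟨k, hkm⟩ : Fin p) : ℕ) ⊓ V top := dif_pos hkm
    rw [hVneq, hGneq]
    have heq : V ⟨j, hjm⟩ ⊓ (Gsub p q U ((idx ⟨k, hkm⟩ : Fin p) : ℕ) ⊓ V top)
        = V ⟨j, hjm⟩ ⊓ Gsub p q U ((idx ⟨k, hkm⟩ : Fin p) : ℕ) := by
      rw [inf_comm (Gsub p q U _) (V top), ← inf_assoc,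
        inf_eq_left.mpr (hVtop ⟨j, hjm⟩)]
    rw [heq]
    have h1 := finrank_inf_ge (V ⟨j, hjm⟩) (Gsub p q U ((idx ⟨k, hkm⟩ : Fin p) : ℕ))
    have h2 := finrank_Gsub_ge (p := p) (q := q) hunit (idx ⟨k, hkm⟩).isLt
    have h3 := hVrank ⟨j, hjm⟩
    have h4 : (idx ⟨k, hkm⟩ : ℕ) + (j - k) ≤ (idx ⟨j, hjm⟩ : ℕ) := by
      have h5 := idx_diff idx hidx (j - k) ⟨k, hkm⟩
        (by show k + (j - k) < m; omega)
      have heq2 : (⟨((⟨k, hkm⟩ : Fin m) : ℕ) + (j - k),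
          by show k + (j - k) < m; omega⟩ : Fin m) = ⟨j, hjm⟩ := by
        apply Fin.ext
        show k + (j - k) = j
        omega
      rw [heq2] at h5
      omega
    have h6 := (idx ⟨j, hjm⟩).isLt
    omega
  obtain ⟨T, hTrank, hTtop, hTV, hTG⟩ := greedy m hm Vn Gn hVmono' hGanti' hVG'
  have hTtop' : T ≤ V top := by
    have h1 : Vn (m - 1) = V top := by
      simp only [hVn, dif_pos (show m - 1 < m by omega)]
      rfl
    rwa [h1] at hTtop
  have hTpos : ∀ x ∈ T, x ≠ 0 → 0 < (pairing p q x x).re :=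
    fun x hx => hpos x (hTtop' hx)
  -- pick the subordinate system x
  obtain ⟨x, hxmem, hxorth⟩ := chainPick m (fun j => T ⊓ Vn (j : ℕ))
    (fun k y hy => hTpos y hy.1)
    (fun j => hTV (j : ℕ) j.isLt)
  -- pick the comparison system w
  obtain ⟨z0, hz0mem, hz0orth⟩ := chainPick m (fun k => T ⊓ Gn (m - 1 - (k : ℕ)))
    (fun k y hy => hTpos y hy.1)
    (fun k => by
      have h1 := hTG (m - 1 - (k : ℕ)) (by have := k.isLt; omega)
      have h2 : m - (m - 1 - (k : ℕ)) = (k : ℕ) + 1 := by have := k.isLt; omega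
      rw [h2] at h1
      exact h1)
  set w : Fin m → Fin (p + q) → ℂ :=
    fun k => z0 ⟨m - 1 - (k : ℕ), by have := k.isLt; omega⟩ with hwdef
  have hwmem : ∀ k : Fin m, w k ∈ T ⊓ Gn (k : ℕ) := by
    intro k
    have h1 := hz0mem ⟨m - 1 - (k : ℕ), by have := k.isLt; omega⟩
    have h2 : m - 1 - (m - 1 - (k : ℕ)) = (k : ℕ) := by have := k.isLt; omega
    rw [h2] at h1
    exact h1
  have hworth : ∀ j k, pairing p q (w j) (w k) = if j = k then 1 else 0 := by
    intro j k
    have h1 := hz0orth ⟨m - 1 - (j : ℕ), by have := j.isLt; omega⟩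
      ⟨m - 1 - (k : ℕ), by have := k.isLt; omega⟩
    have hiff : ((⟨m - 1 - (j : ℕ), by have := j.isLt; omega⟩ : Fin m)
        = ⟨m - 1 - (k : ℕ), by have := k.isLt; omega⟩) ↔ j = k := by
      rw [Fin.mk.injEq, Fin.ext_iff]
      have := j.isLt; have := k.isLt
      omega
    rw [hwdef] at *
    rw [h1, if_congr hiff rfl rfl]
  -- trace invariance
  have htr := trace_invariance m A T hTrank hTpos x w
    (fun j => (hxmem j).1) (fun k => (hwmem k).1) hxorth hworth
  -- Rayleigh bound for each w k
  have hray : ∀ k : Fin m, (lam (idx k) : ℝ) ≤ (pairing p q (A *ᵥ w k) (w k)).re := by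
    intro k
    apply rayleigh_bound hp hq A U lam mu hlam hmu hlm hunit hUJ hAeq (idx k)
    · have h1 := (hwmem k).2
      simp only [hGn, dif_pos k.isLt] at h1
      have h2 : (⟨(k : ℕ), k.isLt⟩ : Fin m) = k := Fin.eta k k.isLt
      rw [h2] at h1
      exact h1.1
    · have := hworth k k
      simpa using this
  refine ⟨x, ⟨?_, hxorth⟩, ?_⟩
  · intro j
    have h1 := (hxmem j).2
    simp only [hVn, dif_pos j.isLt] at h1
    have h2 : (⟨(j : ℕ), j.isLt⟩ : Fin m) = j := Fin.eta j j.isLt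
    rwa [h2] at h1
  · calc ∑ j : Fin m, lam (idx j)
        ≤ ∑ k : Fin m, (pairing p q (A *ᵥ w k) (w k)).re :=
          Finset.sum_le_sum (fun k _ => hray k)
      _ = (∑ k : Fin m, pairing p q (A *ᵥ w k) (w k)).re := (Complex.re_sum _ _).symm
      _ = (∑ j : Fin m, pairing p q (A *ᵥ x j) (x j)).re := by rw [htr]
      _ = ∑ j : Fin m, (pairing p q (A.mulVec (x j)) (x j)).re := Complex.re_sum _ _
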